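/- Let z = x + iy be a complex number with y ≠ 0. Then the function Y, defined by Y(w) = α(w)·√(1−β(w)²) − i·sign(Im w)·β(w)·√(α(w)²−1) with α(w) = (|w−1|+|w+1|)/2 and β(w) = (|w+1|−|w−1|)/2, is complex differentiable at z with derivative Y′(z) = −z/Y(z). -/

import Mathlib

open Complex

/-- `α(w) = (|w-1| + |w+1|)/2`. -/
noncomputable def alpha (w : ℂ) : ℝ := (‖w - 1‖ + ‖w + 1‖) / 2

/-- `β(w) = (|w+1| - |w-1|)/2`. -/
noncomputable def beta (w : ℂ) : ℝ := (‖w + 1‖ - ‖w - 1‖) / 2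

/-- Principal branch `Y(w)` of `√(1-w²)` on the cut plane `ℂ ∖ ((-∞,-1) ∪ (1,∞))`. -/
noncomputable def Y (w : ℂ) : ℂ :=
  (alpha w * Real.sqrt (1 - (beta w) ^ 2) : ℝ) -
    Complex.I * (Real.sign w.im : ℝ) * (beta w * Real.sqrt ((alpha w) ^ 2 - 1) : ℝ)

lemma absA (w : ℂ) : (‖w - 1‖)^2 = (w.re - 1)^2 + w.im^2 := by
  rw [← Complex.normSq_eq_norm_sq]; simp [Complex.normSq_apply]; ring

lemma absB (w : ℂ) : (‖w + 1‖)^2 = (w.re + 1)^2 + w.im^2 := by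
  rw [← Complex.normSq_eq_norm_sq]; simp [Complex.normSq_apply]; ring

lemma ab_mul (w : ℂ) : alpha w * beta w = w.re := by
  have h1 := absA w; have h2 := absB w
  unfold alpha beta; nlinarith [h1, h2]

lemma sq_sum (w : ℂ) : (alpha w)^2 + (beta w)^2 = w.re^2 + w.im^2 + 1 := by
  have h1 := absA w; have h2 := absB w
  have hA : (0:ℝ) ≤ ‖w - 1‖ := norm_nonneg _
  have hB : (0:ℝ) ≤ ‖w + 1‖ := norm_nonneg _
  unfold alpha beta; nlinarith [h1, h2, mul_nonneg hA hB]

lemma prod_eq (w : ℂ) : ((alpha w)^2 - 1) * (1 - (beta w)^2) = w.im^2 := by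
  have h3 : (alpha w)^2 * (beta w)^2 = w.re^2 := by
    rw [← ab_mul w]; ring
  have := sq_sum w; nlinarith

lemma alpha_ge (w : ℂ) : 1 ≤ alpha w := by
  have h : ‖(w + 1) - (w - 1)‖ ≤ ‖w + 1‖ + ‖w - 1‖ := norm_sub_le _ _
  have h2 : ‖(w + 1) - (w - 1)‖ = 2 := by norm_num
  unfold alpha; rw [h2] at h; linarith

lemma beta_le (w : ℂ) : |beta w| ≤ 1 := by
  have h1 : ‖w + 1‖ - ‖w - 1‖ ≤ ‖(w + 1) - (w - 1)‖ := norm_sub_norm_le _ _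
  have h2 : ‖w - 1‖ - ‖w + 1‖ ≤ ‖(w - 1) - (w + 1)‖ := norm_sub_norm_le _ _
  have e1 : ‖(w + 1) - (w - 1)‖ = 2 := by norm_num
  have e2 : ‖(w - 1) - (w + 1)‖ = 2 := by
    rw [show (w-1)-(w+1) = -2 by ring]; norm_num
  rw [e1] at h1; rw [e2] at h2
  unfold beta; rw [abs_le]; constructor <;> linarith

lemma factors_pos (w : ℂ) (h : w.im ≠ 0) :
    0 < 1 - (beta w)^2 ∧ 0 < (alpha w)^2 - 1 := by
  have hb : 0 ≤ 1 - (beta w)^2 := by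
    have := beta_le w; rw [abs_le] at this; nlinarith [this.1, this.2]
  have ha : 0 ≤ (alpha w)^2 - 1 := by nlinarith [alpha_ge w]
  have hp : 0 < ((alpha w)^2 - 1) * (1 - (beta w)^2) := by
    rw [prod_eq]; positivity
  constructor
  · rcases hb.lt_or_eq with h' | h'
    · exact h'
    · exfalso; rw [← h'] at hp; simp at hp
  · rcases ha.lt_or_eq with h' | h'
    · exact h'
    · exfalso; rw [← h'] at hp; simp at hp

lemma Y_re (w : ℂ) : (Y w).re = alpha w * Real.sqrt (1 - (beta w)^2) := by
  simp [Y]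

lemma Y_im (w : ℂ) : (Y w).im = -(Real.sign w.im * (beta w * Real.sqrt ((alpha w)^2 - 1))) := by
  simp [Y]

lemma Y_re_pos (w : ℂ) (h : w.im ≠ 0) : 0 < (Y w).re := by
  rw [Y_re]
  have h1 := (factors_pos w h).1
  have := alpha_ge w
  have := Real.sqrt_pos.mpr h1
  positivity

lemma Ysq (w : ℂ) (h : w.im ≠ 0) : (Y w)^2 = 1 - w^2 := by
  have h1 := (factors_pos w h).1
  have h2 := (factors_pos w h).2
  have hs2 : (Real.sign w.im)^2 = 1 := by
    rcases lt_or_gt_of_ne h with h' | h'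
    · rw [Real.sign_of_neg h']; norm_num
    · rw [Real.sign_of_pos h']; norm_num
  have hsqrt : Real.sqrt (1 - (beta w)^2) * Real.sqrt ((alpha w)^2 - 1) = |w.im| := by
    rw [← Real.sqrt_mul h1.le, ← Real.sqrt_sq_eq_abs]
    congr 1; rw [← prod_eq w]; ring
  have hsgn : Real.sign w.im * |w.im| = w.im := by
    rcases lt_or_gt_of_ne h with h' | h'
    · rw [Real.sign_of_neg h', abs_of_neg h']; ring
    · rw [Real.sign_of_pos h', abs_of_pos h']; ring
  have e1 := Real.sq_sqrt h1.le
  have e2 := Real.sq_sqrt h2.le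
  have hss := sq_sum w
  have hab := ab_mul w
  have h3 : (alpha w)^2 * (beta w)^2 = w.re^2 := by rw [← hab]; ring
  rw [pow_two, pow_two, Complex.ext_iff]
  constructor
  · simp only [Complex.mul_re, Y_re, Y_im, Complex.sub_re, Complex.one_re]
    linear_combination (alpha w)^2 * e1 +
      (-(beta w * Real.sqrt ((alpha w)^2 - 1))^2) * hs2 - (beta w)^2 * e2 + hss - 2*h3
  · simp only [Complex.mul_im, Y_re, Y_im, Complex.sub_im, Complex.one_im]
    linear_combination (-2*alpha w*beta w*Real.sign w.im) * hsqrt +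
      (-2*alpha w*beta w)*hsgn + (-2*w.im)*hab

lemma slit (w : ℂ) (h : w.im ≠ 0) : (1 - w^2) ∈ Complex.slitPlane := by
  rw [Complex.mem_slitPlane_iff]
  by_cases hx : w.re = 0
  · left
    simp only [Complex.sub_re, Complex.one_re, pow_two, Complex.mul_re, hx]
    nlinarith [sq_nonneg w.im, pow_pos (abs_pos.mpr h) 2]
  · right
    simp only [Complex.sub_im, Complex.one_im, pow_two, Complex.mul_im]
    intro hc
    have h0 : w.re * w.im = 0 := by linarith
    rcases mul_eq_zero.mp h0 with h' | h'
    · exact hx h'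
    · exact h h'

lemma log_half_im (v : ℂ) : (Complex.log v * ((1:ℂ)/2)).im = Complex.arg v / 2 := by
  simp [Complex.mul_im, Complex.log_im, Complex.log_re]; ring

lemma cpow_half_re_pos {v : ℂ} (hv : v ∈ Complex.slitPlane) :
    0 < (v ^ ((1:ℂ)/2)).re := by
  have hv0 : v ≠ 0 := Complex.slitPlane_ne_zero hv
  rw [Complex.cpow_def_of_ne_zero hv0, Complex.exp_re, log_half_im]
  have h1 : Complex.arg v < Real.pi := by
    rw [Complex.arg_lt_pi_iff]
    rw [Complex.mem_slitPlane_iff] at hv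
    rcases hv with h | h
    · exact Or.inl h.le
    · exact Or.inr h
  have h2 := Complex.neg_pi_lt_arg v
  have hcos : 0 < Real.cos (Complex.arg v / 2) :=
    Real.cos_pos_of_mem_Ioo ⟨by linarith, by linarith⟩
  positivity

lemma Y_eq (w : ℂ) (h : w.im ≠ 0) : Y w = (1 - w^2) ^ ((1:ℂ)/2) := by
  have hslit := slit w h
  set c := (1 - w^2) ^ ((1:ℂ)/2) with hc
  have hv0 : (1 - w^2) ≠ 0 := Complex.slitPlane_ne_zero hslit
  have hcsq : c^2 = 1 - w^2 := by
    rw [hc, ← Complex.cpow_natCast, ← Complex.cpow_mul]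
    · norm_num
    · rw [show (1:ℂ)/2 = ((1:ℂ)/2) from rfl, log_half_im]
      have := Complex.neg_pi_lt_arg (1 - w^2)
      nlinarith [Real.pi_pos]
    · rw [log_half_im]
      have := Complex.arg_le_pi (1 - w^2)
      nlinarith [Real.pi_pos]
  have hsq : (Y w)^2 = c^2 := by rw [Ysq w h, hcsq]
  have hfac : (Y w - c) * (Y w + c) = 0 := by linear_combination hsq
  rcases mul_eq_zero.mp hfac with h' | h'
  · linear_combination h'
  · exfalso
    have h1 := Y_re_pos w h
    have h2 := cpow_half_re_pos hslit
    have hy : Y w = -c := by linear_combination h'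
    have : (Y w).re = -c.re := by rw [hy]; simp
    rw [← hc] at h2
    linarith

theorem stmt7 (z : ℂ) (h : z.im ≠ 0) : HasDerivAt Y (-z / Y z) z := by
  have hf : HasDerivAt (fun w : ℂ => 1 - w^2) (-(2*z)) z := by
    simpa using ((hasDerivAt_pow 2 z).const_sub 1)
  have hg := hf.cpow_const (c := (1:ℂ)/2) (slit z h)
  have hopen : IsOpen {w : ℂ | w.im ≠ 0} :=
    IsOpen.preimage Complex.continuous_im isOpen_compl_singleton
  have hev : Y =ᶠ[nhds z] fun w => (1 - w^2) ^ ((1:ℂ)/2) := by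
    filter_upwards [hopen.mem_nhds h] with w hw using Y_eq w hw
  have hzc : Y z = (1 - z^2) ^ ((1:ℂ)/2) := Y_eq z h
  have hne : Y z ≠ 0 := by
    intro h0
    have := Y_re_pos z h
    rw [h0] at this; simp at this
  have hd : HasDerivAt (fun w : ℂ => (1 - w^2) ^ ((1:ℂ)/2)) (-z / Y z) z := by
    convert hg using 1
    rw [hzc, show ((1:ℂ)/2 - 1) = -((1:ℂ)/2) by norm_num, Complex.cpow_neg]
    rw [div_eq_mul_inv]; ring
  exact hd.congr_of_eventuallyEq hev
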